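/- Let T be a tree on n vertices and B ⊆ [n] with |B| = r. Then for n×n matrices arising from T, only permutations σ ∈ S_n that fix [n]\B pointwise and whose restriction to B consists of fixed points and transpositions along edges of T contribute a nonzero product Π_i (L^q_T)_{i,σ(i)} to the immanant of the matrix obtained from xI - L^q_T; consequently d_λ of the block-diagonal matrix diag(L^q_T[B|B], I_{n-r}) equals Σ_{j=0}^{⌊r/2⌋} χ_λ(j) · Σ_{M ∈ M_j(B)} q^{2j} Π_{v ∈ B\V(M)} (1 + q^2(deg(v)-1)). -/

import Mathlib

open Finset Polynomial

noncomputable def qLap {n : ℕ} (G : SimpleGraph (Fin n)) [DecidableRel G.Adj]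
    {R : Type*} [CommRing R] (q : R) : Matrix (Fin n) (Fin n) R :=
  Matrix.of fun i j =>
    if i = j then 1 + q ^ 2 * ((G.degree i : R) - 1)
    else if G.Adj i j then -q else 0

/-- Irreducible character of `Sₙ` indexed by the partition `lam`, via the
Frobenius character formula. -/
noncomputable def chiPart (n : ℕ) (lam : Fin n → ℕ) (σ : Equiv.Perm (Fin n)) : ℤ :=
  MvPolynomial.coeff (Finsupp.equivFunOnFinite.symm fun i => lam i + (n - 1 - (i : ℕ)))
    ((∏ i : Fin n, ∏ j ∈ Finset.univ.filter (fun j => i < j),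
        (MvPolynomial.X i - MvPolynomial.X j : MvPolynomial (Fin n) ℤ)) *
      ((σ.cycleType.map fun c =>
          ∑ i : Fin n, (MvPolynomial.X i : MvPolynomial (Fin n) ℤ) ^ c).prod *
        (∑ i : Fin n, (MvPolynomial.X i : MvPolynomial (Fin n) ℤ)) ^ (n - σ.cycleType.sum)))

noncomputable def imman {n : ℕ} {R : Type*} [CommRing R] (χ : Equiv.Perm (Fin n) → R)
    (A : Matrix (Fin n) (Fin n) R) : R :=
  ∑ σ : Equiv.Perm (Fin n), χ σ * ∏ i, A i (σ i)

open scoped Classical in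
/-- `M_j(B)`: the `j`-edge matchings of the forest induced by `G` on `B`. -/
noncomputable def bMatchings {n : ℕ} (G : SimpleGraph (Fin n)) [DecidableRel G.Adj]
    (B : Finset (Fin n)) (j : ℕ) : Finset (Finset (Sym2 (Fin n))) :=
  G.edgeFinset.powerset.filter fun M =>
    M.card = j ∧ (∀ e ∈ M, ∀ v, v ∈ e → v ∈ B) ∧
      ∀ e ∈ M, ∀ f ∈ M, e ≠ f → ∀ v : Fin n, ¬(v ∈ e ∧ v ∈ f)

open scoped Classical in
/-- `m_{B,j}(q) = ∑_{M ∈ M_j(B)} q^{2j} ∏_{v ∈ B \ V(M)} (1 + q²(deg v - 1))`. -/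
noncomputable def mBj {n : ℕ} (G : SimpleGraph (Fin n)) [DecidableRel G.Adj]
    (B : Finset (Fin n)) (j : ℕ) : Polynomial ℝ :=
  ∑ M ∈ bMatchings G B j,
    X ^ (2 * j) *
      ∏ v ∈ B.filter (fun v => ¬∃ e ∈ M, v ∈ e),
        (1 + X ^ 2 * ((G.degree v : Polynomial ℝ) - 1))

section
variable {n : ℕ}
namespace ImmanAux



/-- walk along iterates -/
lemma walk_of_iterate (G : SimpleGraph (Fin n)) (τ : Equiv.Perm (Fin n)) (i : Fin n)
    (hadj : ∀ m : ℕ, G.Adj (τ^[m] i) (τ^[m+1] i)) (t : ℕ) :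
    ∃ w : G.Walk i (τ^[t] i), w.support = (List.range (t+1)).map (fun m => τ^[m] i) := by
  induction t with
  | zero => exact ⟨SimpleGraph.Walk.nil, by simp [List.range_succ]⟩
  | succ t ih =>
    obtain ⟨w, hw⟩ := ih
    refine ⟨w.concat (hadj t), ?_⟩
    rw [SimpleGraph.Walk.support_concat, hw, List.range_succ]
    simp [List.range_succ, pow_succ, Equiv.Perm.mul_apply]

lemma invol_of_adj {G : SimpleGraph (Fin n)} (hG : G.IsAcyclic) (τ : Equiv.Perm (Fin n))
    (hadj : ∀ i, τ i ≠ i → G.Adj i (τ i)) (i : Fin n) : τ (τ i) = i := by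
  by_cases h1 : τ i = i
  · rw [h1, h1]
  by_contra h2
  have hnf : ∀ m : ℕ, τ (τ^[m] i) ≠ τ^[m] i := by
    intro m
    induction m with
    | zero => simpa using h1
    | succ m ih =>
      rw [Function.iterate_succ_apply']
      intro h
      exact ih (τ.injective h)
  have hadj' : ∀ m : ℕ, G.Adj (τ^[m] i) (τ^[m+1] i) := by
    intro m
    rw [Function.iterate_succ_apply']
    exact hadj _ (hnf m)
  have hper : i ∈ Function.periodicPts ⇑τ := by
    refine ⟨orderOf τ, orderOf_pos τ, ?_⟩
    show τ^[orderOf τ] i = i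
    rw [Equiv.Perm.iterate_eq_pow, pow_orderOf_eq_one]
    rfl
  set k := Function.minimalPeriod ⇑τ i with hkdef
  have hk : τ^[k] i = i := Function.isPeriodicPt_minimalPeriod ⇑τ i
  have hkpos : 0 < k := Function.minimalPeriod_pos_of_mem_periodicPts hper
  have hk1 : k ≠ 1 := by intro h; rw [h] at hk; simp at hk; exact h1 hk
  have hk2 : k ≠ 2 := by
    intro h; rw [h] at hk
    simp only [Function.iterate_succ, Function.iterate_one, Function.comp_apply,
      Function.iterate_zero, id_eq] at hk
    exact h2 (by simpa using hk)
  have hk3 : 3 ≤ k := by omega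
  have hinj := Function.iterate_injOn_Iio_minimalPeriod (f := ⇑τ) (x := i)
  rw [← hkdef] at hinj
  obtain ⟨w, hw⟩ := walk_of_iterate G τ i hadj' (k - 1)
  have hwnodup : w.support.Nodup := by
    rw [hw]
    refine List.Nodup.map_on ?_ (List.nodup_range)
    intro x hx y hy hxy
    exact hinj (by simp at hx ⊢; omega) (by simp at hy ⊢; omega) hxy
  have hAdj2 : G.Adj i (τ^[k-1] i) := by
    have := hadj' (k - 1)
    rw [show k - 1 + 1 = k by omega, hk] at this
    exact this.symm
  have hne : i ≠ τ^[k-1] i := by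
    intro h
    have h0 : (0 : ℕ) = k - 1 := by
      refine hinj (Set.mem_Iio.mpr hkpos) (Set.mem_Iio.mpr (by omega)) ?_
      show τ^[0] i = τ^[k-1] i
      rw [Function.iterate_zero_apply]
      exact h
    omega
  set P1 : G.Path i (τ^[k-1] i) :=
    ⟨SimpleGraph.Walk.cons hAdj2 SimpleGraph.Walk.nil, by
      rw [SimpleGraph.Walk.isPath_def]
      simp only [SimpleGraph.Walk.support_cons, SimpleGraph.Walk.support_nil]
      exact List.nodup_cons.mpr ⟨by simpa using hne, List.nodup_singleton _⟩⟩
  set P2 : G.Path i (τ^[k-1] i) := ⟨w, (SimpleGraph.Walk.isPath_def _).mpr hwnodup⟩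
  have := hG.path_unique P1 P2
  have hlen : (P1 : G.Walk i (τ^[k-1] i)).support.length
      = (P2 : G.Walk i (τ^[k-1] i)).support.length := by rw [this]
  have h1len : (P1 : G.Walk i (τ^[k-1] i)).support.length = 2 := by
    simp [P1]
  have h2len : (P2 : G.Walk i (τ^[k-1] i)).support.length = k := by
    show w.support.length = k
    rw [hw]
    simp
    omega
  omega




def Disj (M : Finset (Sym2 (Fin n))) : Prop :=
  ∀ e ∈ M, ∀ f ∈ M, e ≠ f → ∀ v : Fin n, ¬(v ∈ e ∧ v ∈ f)

noncomputable def sym2swap : Sym2 (Fin n) → Equiv.Perm (Fin n) :=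
  Sym2.lift ⟨fun a b => Equiv.swap a b, fun a b => Equiv.swap_comm a b⟩

lemma sym2swap_mk (a b : Fin n) : sym2swap s(a, b) = Equiv.swap a b := rfl

lemma sym2swap_not_mem {e : Sym2 (Fin n)} {x : Fin n} (h : x ∉ e) : sym2swap e x = x := by
  induction e using Sym2.ind with
  | _ a b =>
    rw [Sym2.mem_iff, not_or] at h
    rw [sym2swap_mk]
    exact Equiv.swap_apply_of_ne_of_ne h.1 h.2

lemma disj_comm {M : Finset (Sym2 (Fin n))} (hD : Disj M) :
    Set.Pairwise (↑M : Set (Sym2 (Fin n))) fun a b => Commute (sym2swap a) (sym2swap b) := by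
  intro e he f hf hef
  apply Equiv.Perm.Disjoint.commute
  intro x
  by_cases hx : x ∈ e
  · right
    exact sym2swap_not_mem fun hx' => hD e he f hf hef x ⟨hx, hx'⟩
  · left
    exact sym2swap_not_mem hx

open scoped Classical in
noncomputable def permOf (M : Finset (Sym2 (Fin n))) : Equiv.Perm (Fin n) :=
  if h : Disj M then M.noncommProd sym2swap (disj_comm h) else 1

lemma disj_of_subset {M N : Finset (Sym2 (Fin n))} (h : N ⊆ M) (hD : Disj M) : Disj N :=
  fun e he f hf => hD e (h he) f (h hf)

lemma permOf_insert (a : Sym2 (Fin n)) (s : Finset (Sym2 (Fin n))) (ha : a ∉ s)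
    (hD : Disj (insert a s)) : permOf (insert a s) = sym2swap a * permOf s := by
  have hDs : Disj s := disj_of_subset (Finset.subset_insert a s) hD
  classical
  rw [permOf, permOf, dif_pos hD, dif_pos hDs,
    Finset.noncommProd_insert_of_notMem _ _ _ _ ha]

lemma permOf_apply_not_mem : ∀ (M : Finset (Sym2 (Fin n))), Disj M → ∀ x : Fin n,
    (∀ e ∈ M, x ∉ e) → permOf M x = x := by
  intro M
  induction M using Finset.induction_on with
  | empty =>
    intro _ x _
    classical
    rw [permOf, dif_pos (by intro e he; simp at he)]
    simp
  | @insert a s ha ih =>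
    intro hD x hx
    rw [permOf_insert a s ha hD, Equiv.Perm.mul_apply,
      ih (disj_of_subset (Finset.subset_insert a s) hD) x
        (fun e he => hx e (Finset.mem_insert_of_mem he))]
    exact sym2swap_not_mem (hx a (Finset.mem_insert_self a s))

lemma permOf_apply_mem : ∀ (M : Finset (Sym2 (Fin n))), Disj M → ∀ a b : Fin n,
    s(a, b) ∈ M → permOf M a = b := by
  intro M
  induction M using Finset.induction_on with
  | empty => intro _ a b h; simp at h
  | @insert e s he ih =>
    intro hD a b hab
    have hDs : Disj s := disj_of_subset (Finset.subset_insert e s) hD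
    rw [permOf_insert e s he hD, Equiv.Perm.mul_apply]
    rcases Finset.mem_insert.mp hab with h | h
    · have hfix : permOf s a = a := by
        refine permOf_apply_not_mem s hDs a fun f hf hmem => ?_
        exact hD e (Finset.mem_insert_self e s) f (Finset.mem_insert_of_mem hf)
          (fun hef => he (hef ▸ hf)) a ⟨h ▸ Sym2.mem_mk_left a b, hmem⟩
      rw [hfix, ← h, sym2swap_mk, Equiv.swap_apply_left]
    · rw [ih hDs a b h]
      refine sym2swap_not_mem fun hmem => ?_
      exact hD e (Finset.mem_insert_self e s) s(a, b) (Finset.mem_insert_of_mem h)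
        (fun hef => he (hef ▸ h)) b ⟨hmem, Sym2.mem_mk_right a b⟩




noncomputable def Mof (τ : Equiv.Perm (Fin n)) : Finset (Sym2 (Fin n)) :=
  τ.support.image fun i => s(i, τ i)

lemma mem_Mof {τ : Equiv.Perm (Fin n)} {e : Sym2 (Fin n)} :
    e ∈ Mof τ ↔ ∃ i, τ i ≠ i ∧ e = s(i, τ i) := by
  simp [Mof, Equiv.Perm.mem_support, eq_comm]

lemma Mof_canon {τ : Equiv.Perm (Fin n)} (hinv : ∀ i, τ (τ i) = i) {e : Sym2 (Fin n)}
    (he : e ∈ Mof τ) {v : Fin n} (hv : v ∈ e) : τ v ≠ v ∧ e = s(v, τ v) := by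
  obtain ⟨i, hi, rfl⟩ := mem_Mof.mp he
  rcases Sym2.mem_iff.mp hv with rfl | rfl
  · exact ⟨hi, rfl⟩
  · refine ⟨by rw [hinv]; exact fun h => hi h.symm, ?_⟩
    rw [hinv, Sym2.eq_swap]

/-- cycle type of a nontrivial involution -/
lemma cycleType_invol (τ : Equiv.Perm (Fin n)) (hinv : ∀ i, τ (τ i) = i) :
    τ.cycleType = Multiset.replicate (Multiset.card τ.cycleType) 2 := by
  rw [Multiset.eq_replicate_card]
  intro a ha
  have ha2 := Equiv.Perm.two_le_of_mem_cycleType ha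
  have hτ1 : τ ≠ 1 := by
    intro h
    rw [h, Equiv.Perm.cycleType_one] at ha
    simp at ha
  have hsq : τ ^ 2 = 1 := by
    ext x
    simp [pow_two, hinv x]
  have ho : orderOf τ = 2 := orderOf_eq_prime hsq hτ1
  have hdvd : a ∣ 2 := by
    rw [← ho, ← Equiv.Perm.lcm_cycleType]
    exact Multiset.dvd_lcm ha
  have := Nat.le_of_dvd (by norm_num) hdvd
  omega

lemma card_cycleType_invol (τ : Equiv.Perm (Fin n)) (hinv : ∀ i, τ (τ i) = i) :
    τ.support.card = 2 * Multiset.card τ.cycleType := by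
  conv_lhs => rw [← Equiv.Perm.sum_cycleType]
  rw [cycleType_invol τ hinv]
  simp [Multiset.sum_replicate, mul_comm]

def endFinset : Sym2 (Fin n) → Finset (Fin n) :=
  Sym2.lift ⟨fun a b => ({a, b} : Finset (Fin n)), fun a b => by
    ext x; simp [or_comm]⟩

lemma mem_endFinset {v : Fin n} {e : Sym2 (Fin n)} : v ∈ endFinset e ↔ v ∈ e := by
  induction e using Sym2.ind with
  | _ a b => simp [endFinset, Sym2.mem_iff]

lemma support_eq_biUnion {τ : Equiv.Perm (Fin n)} (hinv : ∀ i, τ (τ i) = i) :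
    τ.support = (Mof τ).biUnion endFinset := by
  ext v
  simp only [Finset.mem_biUnion, Equiv.Perm.mem_support]
  constructor
  · intro hv
    exact ⟨s(v, τ v), mem_Mof.mpr ⟨v, hv, rfl⟩, mem_endFinset.mpr (Sym2.mem_mk_left _ _)⟩
  · rintro ⟨e, he, hv⟩
    exact (Mof_canon hinv he (mem_endFinset.mp hv)).1

lemma Mof_pairwise {τ : Equiv.Perm (Fin n)} (hinv : ∀ i, τ (τ i) = i) :
    ∀ e ∈ Mof τ, ∀ f ∈ Mof τ, e ≠ f → ∀ v : Fin n, ¬(v ∈ e ∧ v ∈ f) := by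
  intro e he f hf hef v ⟨hve, hvf⟩
  exact hef ((Mof_canon hinv he hve).2.trans (Mof_canon hinv hf hvf).2.symm)

lemma card_support_Mof {τ : Equiv.Perm (Fin n)} (hinv : ∀ i, τ (τ i) = i) :
    τ.support.card = 2 * (Mof τ).card := by
  classical
  rw [support_eq_biUnion hinv, Finset.card_biUnion]
  · rw [Finset.sum_congr rfl (g := fun _ => 2), Finset.sum_const, smul_eq_mul, mul_comm]
    intro e he
    obtain ⟨i, hi, rfl⟩ := mem_Mof.mp he
    show ({i, τ i} : Finset (Fin n)).card = 2
    rw [Finset.card_pair (fun h => hi h.symm)]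
  · intro e he f hf hef
    rw [Function.onFun, Finset.disjoint_left]
    intro v hve hvf
    exact Mof_pairwise hinv e he f hf hef v
      ⟨mem_endFinset.mp hve, mem_endFinset.mp hvf⟩


end ImmanAux
end

open ImmanAux in

open scoped Classical in
/-- For a tree `T` on `[n]` and `B ⊆ [n]`, the immanant of the block-diagonal
matrix `diag(L^q_T[B|B], I)` (equal to `L^q_T` on `B × B`, the identity
outside) equals `∑_{j=0}^{⌊|B|/2⌋} χ_λ(2^j 1^{n-2j}) m_{B,j}(q)`.  Here `σ j`
is any permutation of cycle type `2^j 1^{n-2j}`. -/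
theorem imman_blockDiag_qLap {n : ℕ} (G : SimpleGraph (Fin n)) [DecidableRel G.Adj]
    (hG : G.IsTree) (lam : Fin n → ℕ) (hlam : Antitone lam) (hsum : ∑ i, lam i = n)
    (B : Finset (Fin n))
    (σ : ℕ → Equiv.Perm (Fin n))
    (hσ : ∀ j ≤ B.card / 2, (σ j).cycleType = Multiset.replicate j 2) :
    imman (fun τ => ((chiPart n lam τ : ℤ) : Polynomial ℝ))
        (Matrix.of fun i j =>
          if i ∈ B ∧ j ∈ B then qLap G (X : Polynomial ℝ) i j
          else if i = j then 1 else 0)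
      = ∑ j ∈ Finset.range (B.card / 2 + 1),
          ((chiPart n lam (σ j) : ℤ) : Polynomial ℝ) * mBj G B j := by
  classical
  have hAcyc : G.IsAcyclic := hG.2
  set χ : Equiv.Perm (Fin n) → Polynomial ℝ :=
    fun τ => ((chiPart n lam τ : ℤ) : Polynomial ℝ) with hχ
  set A : Matrix (Fin n) (Fin n) (Polynomial ℝ) :=
    Matrix.of fun i j => if i ∈ B ∧ j ∈ B then qLap G (X : Polynomial ℝ) i j
      else if i = j then 1 else 0 with hA
  have hAdiag : ∀ i, A i i
      = if i ∈ B then 1 + X ^ 2 * ((G.degree i : Polynomial ℝ) - 1) else 1 := by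
    intro i
    by_cases hi : i ∈ B
    · simp [hA, hi, qLap]
    · simp [hA, hi]
  have hAedge : ∀ i j, i ≠ j → i ∈ B → j ∈ B → G.Adj i j → A i j = -X := by
    intro i j hij hi hj hadj
    simp [hA, hi, hj, qLap, hij, hadj]
  have hAzero : ∀ i j, i ≠ j → ¬(i ∈ B ∧ j ∈ B ∧ G.Adj i j) → A i j = 0 := by
    intro i j hij hbad
    by_cases hB : i ∈ B ∧ j ∈ B
    · have hnadj : ¬ G.Adj i j := fun h => hbad ⟨hB.1, hB.2, h⟩
      simp [hA, hB.1, hB.2, qLap, hij, hnadj]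
    · simp only [hA, Matrix.of_apply, if_neg hB, if_neg hij]
  set P : Equiv.Perm (Fin n) → Prop :=
    fun τ => ∀ i, τ i ≠ i → i ∈ B ∧ τ i ∈ B ∧ G.Adj i (τ i) with hPdef
  have hzero : ∀ τ, ¬ P τ → ∏ i, A i (τ i) = 0 := by
    intro τ h
    simp only [hPdef] at h
    rcases not_forall.mp h with ⟨i, hi⟩
    rcases Classical.not_imp.mp hi with ⟨hne, hbad⟩
    exact Finset.prod_eq_zero (Finset.mem_univ i)
      (hAzero i (τ i) (fun h' => hne h'.symm) hbad)
  have hinvP : ∀ τ, P τ → ∀ i, τ (τ i) = i :=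
    fun τ hPτ => invol_of_adj hAcyc τ (fun i h => (hPτ i h).2.2)
  have hleP : ∀ τ, P τ → (∀ i, τ (τ i) = i) → (Mof τ).card ≤ B.card / 2 := by
    intro τ hPτ hinv
    rw [Nat.le_div_iff_mul_le (by norm_num : 0 < 2), mul_comm, ← card_support_Mof hinv]
    exact Finset.card_le_card fun i hi => (hPτ i (Equiv.Perm.mem_support.mp hi)).1
  have hfixiff : ∀ (τ : Equiv.Perm (Fin n)), (∀ i, τ (τ i) = i) →
      ∀ v, τ v = v ↔ ¬∃ e ∈ Mof τ, v ∈ e := by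
    intro τ hinv v
    constructor
    · rintro hv ⟨e, he, hve⟩
      exact (Mof_canon hinv he hve).1 hv
    · intro h
      by_contra hv
      exact h ⟨s(v, τ v), mem_Mof.mpr ⟨v, hv, rfl⟩, Sym2.mem_mk_left _ _⟩
  have hfilter : imman χ A = ∑ τ ∈ Finset.univ.filter P, χ τ * ∏ i, A i (τ i) := by
    rw [imman]
    symm
    refine Finset.sum_filter_of_ne ?_
    intro τ _ hne
    by_contra hτ
    exact hne (by rw [hzero τ hτ, mul_zero])
  have hRHS : ∑ j ∈ Finset.range (B.card / 2 + 1), χ (σ j) * mBj G B j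
      = ∑ p ∈ (Finset.range (B.card / 2 + 1)).sigma (fun j => bMatchings G B j),
          χ (σ p.1) * (X ^ (2 * p.1) *
            ∏ v ∈ B.filter (fun v => ¬∃ e ∈ p.2, v ∈ e),
              (1 + X ^ 2 * ((G.degree v : Polynomial ℝ) - 1))) := by
    rw [Finset.sum_sigma]
    refine Finset.sum_congr rfl fun j hj => ?_
    rw [mBj, Finset.mul_sum]
  show imman χ A = _
  rw [hfilter, hRHS]
  refine Finset.sum_bij' (fun τ _ => (⟨(Mof τ).card, Mof τ⟩ : Σ _ : ℕ, Finset (Sym2 (Fin n))))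
    (fun p _ => permOf p.2) ?_ ?_ ?_ ?_ ?_
  · -- hi : maps into sigma set
    intro τ hτ
    have hPτ : P τ := (Finset.mem_filter.mp hτ).2
    have hinv := hinvP τ hPτ
    rw [Finset.mem_sigma]
    constructor
    · exact Finset.mem_range.mpr (Nat.lt_succ_of_le (hleP τ hPτ hinv))
    · rw [bMatchings, Finset.mem_filter, Finset.mem_powerset]
      refine ⟨?_, rfl, ?_, Mof_pairwise hinv⟩
      · intro e he
        obtain ⟨i, hi, rfl⟩ := mem_Mof.mp he
        rw [SimpleGraph.mem_edgeFinset, SimpleGraph.mem_edgeSet]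
        exact (hPτ i hi).2.2
      · intro e he v hv
        exact (hPτ v (Mof_canon hinv he hv).1).1
  · -- hj : inverse maps into filter P
    rintro ⟨j, M⟩ hp
    have hM := (Finset.mem_sigma.mp hp).2
    rw [bMatchings, Finset.mem_filter, Finset.mem_powerset] at hM
    obtain ⟨hsub, hcard, hvert, hdisj⟩ := hM
    have hD : Disj M := hdisj
    rw [Finset.mem_filter]
    refine ⟨Finset.mem_univ _, ?_⟩
    intro i hne
    have hie : ∃ e ∈ M, i ∈ e := by
      by_contra h
      push_neg at h
      exact hne (permOf_apply_not_mem M hD i h)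
    obtain ⟨e, he, hie⟩ := hie
    obtain ⟨y, rfl⟩ := Sym2.mem_iff_exists.mp hie
    have hpi : permOf M i = y := permOf_apply_mem M hD i y he
    rw [hpi]
    refine ⟨hvert _ he i (Sym2.mem_mk_left _ _), hvert _ he y (Sym2.mem_mk_right _ _), ?_⟩
    have hedge := hsub he
    rwa [SimpleGraph.mem_edgeFinset, SimpleGraph.mem_edgeSet] at hedge
  · -- left inverse
    intro τ hτ
    have hPτ : P τ := (Finset.mem_filter.mp hτ).2
    have hinv := hinvP τ hPτ
    have hDτ : Disj (Mof τ) := Mof_pairwise hinv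
    show permOf (Mof τ) = τ
    ext x
    by_cases hx : τ x = x
    · have hfx : permOf (Mof τ) x = x :=
        permOf_apply_not_mem _ hDτ x fun e he hmem => (Mof_canon hinv he hmem).1 hx
      rw [hfx, hx]
    · have hfx : permOf (Mof τ) x = τ x :=
        permOf_apply_mem _ hDτ x (τ x) (mem_Mof.mpr ⟨x, hx, rfl⟩)
      rw [hfx]
  · -- right inverse
    rintro ⟨j, M⟩ hp
    have hM := (Finset.mem_sigma.mp hp).2
    rw [bMatchings, Finset.mem_filter, Finset.mem_powerset] at hM
    obtain ⟨hsub, hcard, hvert, hdisj⟩ := hM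
    have hD : Disj M := hdisj
    have hMM : Mof (permOf M) = M := by
      ext e
      induction e using Sym2.ind with
      | _ a b =>
        constructor
        · intro he
          obtain ⟨i, hne, heq⟩ := mem_Mof.mp he
          rw [heq]
          have hie : ∃ f ∈ M, i ∈ f := by
            by_contra h
            push_neg at h
            exact hne (permOf_apply_not_mem M hD i h)
          obtain ⟨f, hf, hif⟩ := hie
          obtain ⟨y, rfl⟩ := Sym2.mem_iff_exists.mp hif
          rw [permOf_apply_mem M hD i y hf]
          exact hf
        · intro he
          have hab : a ≠ b := by
            intro h
            have := hsub he
            rw [SimpleGraph.mem_edgeFinset] at this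
            exact G.not_isDiag_of_mem_edgeSet this (Sym2.mk_isDiag_iff.mpr h)
          have hpa : permOf M a = b := permOf_apply_mem M hD a b he
          refine mem_Mof.mpr ⟨a, ?_, ?_⟩
          · rw [hpa]; exact fun h => hab h.symm
          · rw [hpa]
    simp only [hMM, hcard]
  · -- values
    intro τ hτ
    have hPτ : P τ := (Finset.mem_filter.mp hτ).2
    have hinv := hinvP τ hPτ
    have hle := hleP τ hPτ hinv
    have hχeq : χ τ = χ (σ (Mof τ).card) := by
      have hct : τ.cycleType = Multiset.replicate (Mof τ).card 2 := by
        have h1 := cycleType_invol τ hinv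
        have h2 := card_support_Mof hinv
        have h3 := card_cycleType_invol τ hinv
        have hcc : Multiset.card τ.cycleType = (Mof τ).card := by omega
        rw [h1, hcc]
      have hchi : chiPart n lam τ = chiPart n lam (σ (Mof τ).card) := by
        unfold chiPart
        rw [hct, hσ _ hle]
      simp only [hχ, hchi]
    have hsupp : Finset.univ.filter (fun i => ¬ τ i = i) = τ.support := by
      ext i
      simp [Equiv.Perm.mem_support]
    have hfix : ∏ i ∈ Finset.univ.filter (fun i => τ i = i), A i (τ i)
        = ∏ v ∈ B.filter (fun v => ¬∃ e ∈ Mof τ, v ∈ e),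
            (1 + X ^ 2 * ((G.degree v : Polynomial ℝ) - 1)) := by
      rw [Finset.prod_congr rfl
        (g := fun i => if i ∈ B then (1 + X ^ 2 * ((G.degree i : Polynomial ℝ) - 1)) else 1)
        (fun i hi => by rw [(Finset.mem_filter.mp hi).2, hAdiag i]), ← Finset.prod_filter]
      refine Finset.prod_congr ?_ fun _ _ => rfl
      ext v
      simp only [Finset.mem_filter, Finset.mem_univ, true_and]
      rw [hfixiff τ hinv v]
      tauto
    have hnonfix : ∏ i ∈ Finset.univ.filter (fun i => ¬ τ i = i), A i (τ i)
        = X ^ (2 * (Mof τ).card) := by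
      rw [Finset.prod_congr hsupp (g := fun _ => -X) (fun i hi => by
        have hne := Equiv.Perm.mem_support.mp hi
        exact hAedge i (τ i) (fun h => hne h.symm) (hPτ i hne).1 (hPτ i hne).2.1
          (hPτ i hne).2.2),
        Finset.prod_const, card_support_Mof hinv]
      exact Even.neg_pow (even_two_mul _) X
    have hprod : ∏ i, A i (τ i)
        = X ^ (2 * (Mof τ).card) *
          ∏ v ∈ B.filter (fun v => ¬∃ e ∈ Mof τ, v ∈ e),
            (1 + X ^ 2 * ((G.degree v : Polynomial ℝ) - 1)) := by
      rw [← Finset.prod_filter_mul_prod_filter_not Finset.univ (fun i => τ i = i),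
        hfix, hnonfix, mul_comm]
    rw [hχeq, hprod]
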